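/- Let ζ = exp(2πi/5) ∈ ℂ. For every integer n ≥ 1 and every integer k, (1 − ζ − ζ⁴)ⁿ ≠ ζᵏ and (1 − ζ − ζ⁴)ⁿ ≠ −ζᵏ. (Consequently, since the ring homomorphism α : ℤ[C₅] → ℂ with α(t) = ζ sends every element ±γ, γ ∈ C₅, to a root of unity, the unit u = 1 − t + t² defines an element of infinite order in the Whitehead group Wh(C₅) ≅ ℤ.) -/

import Mathlib

open Complex in
/-- Let `ζ = exp(2πi/5) ∈ ℂ`. For every integer `n ≥ 1` and every integer `k`,
`(1 − ζ − ζ⁴)ⁿ ≠ ζᵏ` and `(1 − ζ − ζ⁴)ⁿ ≠ −ζᵏ`. Hence the unit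
`u = 1 − t + t²` has infinite order in the Whitehead group `Wh(C₅)`. -/
theorem stmt4 :
    let ζ : ℂ := Complex.exp (2 * Real.pi * Complex.I / 5)
    ∀ n : ℤ, 1 ≤ n → ∀ k : ℤ,
      (1 - ζ - ζ ^ 4) ^ n ≠ ζ ^ k ∧ (1 - ζ - ζ ^ 4) ^ n ≠ -ζ ^ k := by
  intro ζ n hn k
  have hpi := Real.pi_pos
  set θ : ℝ := 2 * Real.pi / 5 with hθ
  have hζ : ζ = Complex.exp ((θ : ℂ) * Complex.I) := by
    show Complex.exp _ = _
    congr 1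
    push_cast [hθ]
    ring
  have h4 : ζ ^ 4 = Complex.exp (-(θ : ℂ) * Complex.I) := by
    rw [hζ, ← Complex.exp_nat_mul]
    have harg : ((4 : ℕ) : ℂ) * ((θ : ℂ) * Complex.I)
        = -(θ : ℂ) * Complex.I + 2 * Real.pi * Complex.I := by
      push_cast [hθ]; ring
    rw [harg, Complex.exp_add, Complex.exp_two_pi_mul_I, mul_one]
  have hre : (1 : ℂ) - ζ - ζ ^ 4 = ((1 - 2 * Real.cos θ : ℝ) : ℂ) := by
    rw [h4, hζ]
    have h2c : Complex.exp ((θ : ℂ) * Complex.I) + Complex.exp (-(θ : ℂ) * Complex.I)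
        = 2 * Complex.cos (θ : ℂ) := (Complex.two_cos _).symm
    push_cast
    linear_combination -h2c
  -- bounds on r := 1 - 2 cos θ
  have hcos_pos : 0 < Real.cos θ := by
    apply Real.cos_pos_of_mem_Ioo
    constructor
    · nlinarith
    · rw [hθ]; nlinarith
  have hcos_lt : Real.cos θ < 1 / 2 := by
    have := Real.cos_lt_cos_of_nonneg_of_le_pi (x := Real.pi / 3) (y := θ)
      (by positivity) (by rw [hθ]; nlinarith) (by rw [hθ]; nlinarith)
    rwa [Real.cos_pi_div_three] at this
  set r : ℝ := 1 - 2 * Real.cos θ with hr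
  have hr0 : 0 < r := by rw [hr]; linarith
  have hr1 : r < 1 := by rw [hr]; linarith
  have habs : ‖(1 : ℂ) - ζ - ζ ^ 4‖ = r := by
    rw [hre, Complex.norm_real, Real.norm_eq_abs, abs_of_pos hr0]
  have hrn : ‖((1 : ℂ) - ζ - ζ ^ 4) ^ n‖ < 1 := by
    rw [norm_zpow, habs]
    have h1 : r ^ n = r ^ (n - 1) * r ^ (1 : ℤ) := by
      rw [← zpow_add₀ hr0.ne']; ring_nf
    rw [h1, zpow_one]
    calc r ^ (n - 1) * r ≤ 1 * r := by
          apply mul_le_mul_of_nonneg_right _ hr0.le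
          exact zpow_le_one₀ hr0 hr1.le (by omega)
      _ = r := one_mul r
      _ < 1 := hr1
  have hζabs : ‖ζ‖ = 1 := by
    rw [hζ]; exact Complex.norm_exp_ofReal_mul_I θ
  have hk : ‖ζ ^ k‖ = 1 := by rw [norm_zpow, hζabs, one_zpow]
  constructor
  · intro h
    rw [h, hk] at hrn
    exact lt_irrefl 1 hrn
  · intro h
    have hk' : ‖-ζ ^ k‖ = 1 := by rw [norm_neg]; exact hk
    rw [h, hk'] at hrn
    exact lt_irrefl 1 hrn
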